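/- Let I and J be non-empty proper subsets of {1,...,n}. The spaces W_I = K·I_n ⊕ K·D_I ⊕ NT_n(K) and W_J = K·I_n ⊕ K·D_J ⊕ NT_n(K) are similar if and only if I = J or I is the complement of J in {1,...,n}. -/

import Mathlib

/-- Membership in `W_I = K·I_n ⊕ K·D_I ⊕ NT_n(K)`: upper triangular, diagonal entries at
positions of `I` are all equal, and diagonal entries outside `I` are all equal. -/
def memWI {K : Type*} [Field K] {n : ℕ} (I : Set (Fin n))
    (M : Matrix (Fin n) (Fin n) K) : Prop :=
  (∀ i j : Fin n, j < i → M i j = 0) ∧ (∀ i ∈ I, ∀ j ∈ I, M i i = M j j) ∧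
    (∀ (i : Fin n), i ∉ I → ∀ (j : Fin n), j ∉ I → M i i = M j j)

lemma memWI_compl {K : Type*} [Field K] {n : ℕ} (I : Set (Fin n))
    (M : Matrix (Fin n) (Fin n) K) : memWI Iᶜ M ↔ memWI I M := by
  constructor
  · rintro ⟨h1, h2, h3⟩
    exact ⟨h1, fun i hi j hj => h3 i (by simp [hi]) j (by simp [hj]),
      fun i hi j hj => h2 i (by simpa using hi) j (by simpa using hj)⟩
  · rintro ⟨h1, h2, h3⟩
    exact ⟨h1, fun i hi j hj => h3 i (by simpa using hi) j (by simpa using hj),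
      fun i hi j hj => h2 i (by simpa using hi) j (by simpa using hj)⟩

/-- strictly upper triangular standard basis matrices lie in every `W_I`. -/
lemma memWI_stdBasis {K : Type*} [Field K] {n : ℕ} (I : Set (Fin n)) (a b : Fin n)
    (hab : a < b) : memWI I (Matrix.single a b (1 : K)) := by
  refine ⟨fun i j hji => ?_, fun i _ j _ => ?_, fun i _ j _ => ?_⟩
  · apply Matrix.single_apply_of_ne
    rintro ⟨rfl, rfl⟩
    exact absurd hji (not_lt.2 hab.le)
  all_goals
    have h0 : ∀ x : Fin n, Matrix.single a b (1 : K) x x = 0 := fun x =>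
      Matrix.single_apply_of_ne a b 1 x x (by rintro ⟨rfl, rfl⟩; exact hab.ne rfl)
    rw [h0, h0]

/-- `(P * stdBasisMatrix a b 1 * Q) i j = P i a * Q b j`. -/
lemma conj_stdBasis_apply {K : Type*} [Field K] {n : ℕ}
    (P Q : Matrix (Fin n) (Fin n) K) (a b i j : Fin n) :
    (P * Matrix.single a b (1 : K) * Q) i j = P i a * Q b j := by
  rw [Matrix.mul_apply]
  rw [Finset.sum_eq_single b]
  · rw [Matrix.mul_single_apply_same, mul_one]
  · intro l _ hl
    rw [Matrix.mul_single_apply_of_ne (hbj := hl), zero_mul]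
  · simp

/-- Key triangularity lemma: if `P⁻¹ i a * P b j = 0` whenever `a < b` and `j < i`,
then `P⁻¹` is upper triangular. -/
lemma inv_upperTri_of_key {K : Type*} [Field K] {n : ℕ}
    (P : Matrix (Fin n) (Fin n) K) (hP : IsUnit P)
    (key : ∀ a b : Fin n, a < b → ∀ i j : Fin n, j < i → P⁻¹ i a * P b j = 0) :
    ∀ i j : Fin n, j < i → P⁻¹ i j = 0 := by
  intro i0 j0 hji
  by_contra hne
  have hdet : IsUnit P.det := P.isUnit_iff_isUnit_det.mp hP
  haveI : Invertible P := P.invertibleOfIsUnitDet hdet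
  -- P is block triangular for the cut at j0
  have hPf : P.BlockTriangular (fun r : Fin n => if r ≤ j0 then (0 : ℕ) else 1) := by
    intro r c hrc
    simp only at hrc
    by_cases hc : c ≤ j0
    · by_cases hr : r ≤ j0
      · simp [hc, hr] at hrc
      · have hkey := key j0 r (lt_of_not_ge hr) i0 c (lt_of_le_of_lt hc hji)
        rcases mul_eq_zero.mp hkey with h | h
        · exact absurd h hne
        · exact h
    · exfalso
      rw [if_neg hc] at hrc
      split at hrc <;> omega
  have hQf := Matrix.blockTriangular_inv_of_blockTriangular hPf
  have : P⁻¹ i0 j0 = 0 := by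
    apply hQf
    simp only
    rw [if_pos le_rfl, if_neg (not_le.2 hji)]
    exact Nat.zero_lt_one
  exact hne this

/-- conjugation by upper triangular matrices preserves the diagonal. -/
lemma diag_conj {K : Type*} [Field K] {n : ℕ}
    (P M Q : Matrix (Fin n) (Fin n) K)
    (hP : ∀ i j : Fin n, j < i → P i j = 0)
    (hM : ∀ i j : Fin n, j < i → M i j = 0)
    (hQ : ∀ i j : Fin n, j < i → Q i j = 0)
    (hPQ : P * Q = 1) (i : Fin n) : (P * M * Q) i i = M i i := by
  have hPM : ∀ l : Fin n, l < i → (P * M) i l = 0 := by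
    intro l hl
    rw [Matrix.mul_apply]
    apply Finset.sum_eq_zero
    intro k _
    rcases lt_or_ge k i with h | h
    · rw [hP i k h, zero_mul]
    · rw [hM k l (lt_of_lt_of_le hl h), mul_zero]
  have hPMi : (P * M) i i = P i i * M i i := by
    rw [Matrix.mul_apply]
    rw [Finset.sum_eq_single i]
    · intro k _ hk
      rcases lt_or_ge k i with h | h
      · rw [hP i k h, zero_mul]
      · rw [hM k i (lt_of_le_of_ne h (Ne.symm hk)), mul_zero]
    · simp
  have h1 : (P * M * Q) i i = (P * M) i i * Q i i := by
    rw [Matrix.mul_apply]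
    rw [Finset.sum_eq_single i]
    · intro l _ hl
      rcases lt_or_ge l i with h | h
      · rw [hPM l h, zero_mul]
      · rw [hQ l i (lt_of_le_of_ne h (Ne.symm hl)), mul_zero]
    · simp
  have h2 : P i i * Q i i = 1 := by
    have : (P * Q) i i = 1 := by rw [hPQ]; simp
    rw [Matrix.mul_apply] at this
    rw [Finset.sum_eq_single i] at this
    · exact this
    · intro k _ hk
      rcases lt_or_ge k i with h | h
      · rw [hP i k h, zero_mul]
      · rw [hQ k i (lt_of_le_of_ne h (Ne.symm hk)), mul_zero]
    · simp
  rw [h1, hPMi]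
  calc P i i * M i i * Q i i = M i i * (P i i * Q i i) := by ring
    _ = M i i := by rw [h2, mul_one]

/-- `W_I` and `W_J` are similar iff `I = J` or `I = Jᶜ`. -/
theorem stmt12 {K : Type*} [Field K] (n : ℕ) (I J : Set (Fin n))
    (hI : I.Nonempty) (hI' : I ≠ Set.univ) (hJ : J.Nonempty) (hJ' : J ≠ Set.univ) :
    (∃ P : Matrix (Fin n) (Fin n) K, IsUnit P ∧
        (fun M => P * M * P⁻¹) '' {M : Matrix (Fin n) (Fin n) K | memWI I M} =
          {M : Matrix (Fin n) (Fin n) K | memWI J M}) ↔ (I = J ∨ I = Jᶜ) := by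
  classical
  constructor
  · rintro ⟨P, hP, himg⟩
    have hdet : IsUnit P.det := P.isUnit_iff_isUnit_det.mp hP
    have hPQ : P * P⁻¹ = 1 := Matrix.mul_nonsing_inv P hdet
    have hQP : P⁻¹ * P = 1 := Matrix.nonsing_inv_mul P hdet
    have hPinvU : IsUnit P⁻¹ := Matrix.isUnit_nonsing_inv_iff.mpr hP
    have h1 : ∀ M, memWI I M → memWI J (P * M * P⁻¹) := by
      intro M hM
      have : P * M * P⁻¹ ∈ (fun M => P * M * P⁻¹) '' {M | memWI I M} :=
        Set.mem_image_of_mem _ hM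
      rw [himg] at this
      exact this
    have h2 : ∀ N, memWI J N → memWI I (P⁻¹ * N * P) := by
      intro N hN
      have : N ∈ (fun M => P * M * P⁻¹) '' {M | memWI I M} := by rw [himg]; exact hN
      obtain ⟨M, hM, hMN⟩ := this
      have : P⁻¹ * N * P = M := by
        rw [← hMN]
        simp only
        rw [Matrix.mul_assoc P M P⁻¹, Matrix.nonsing_inv_mul_cancel_left _ _ hdet,
          Matrix.mul_assoc, hQP, Matrix.mul_one]
      rw [this]; exact hM
    -- key conditions
    have KP : ∀ a b : Fin n, a < b → ∀ i j : Fin n, j < i → P i a * P⁻¹ b j = 0 := by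
      intro a b hab i j hji
      have := (h1 _ (memWI_stdBasis I a b hab)).1 i j hji
      rwa [conj_stdBasis_apply] at this
    have KQ : ∀ a b : Fin n, a < b → ∀ i j : Fin n, j < i → P⁻¹ i a * P b j = 0 := by
      intro a b hab i j hji
      have := (h2 _ (memWI_stdBasis J a b hab)).1 i j hji
      rwa [conj_stdBasis_apply] at this
    have hQtri : ∀ i j : Fin n, j < i → P⁻¹ i j = 0 := inv_upperTri_of_key P hP KQ
    have hPtri : ∀ i j : Fin n, j < i → P i j = 0 := by
      have hinvinv : P⁻¹⁻¹ = P := Matrix.nonsing_inv_nonsing_inv P hdet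
      have := inv_upperTri_of_key P⁻¹ hPinvU (by rw [hinvinv]; exact KP)
      rwa [hinvinv] at this
    -- the diagonal matrix of I
    set D : Matrix (Fin n) (Fin n) K :=
      Matrix.diagonal (fun i => if i ∈ I then (1 : K) else 0) with hD
    have hDmem : memWI I D := by
      refine ⟨fun i j hji => ?_, fun i hi j hj => ?_, fun i hi j hj => ?_⟩
      · exact Matrix.diagonal_apply_ne _ (ne_of_gt hji)
      · simp [hD, Matrix.diagonal_apply_eq, hi, hj]
      · simp [hD, Matrix.diagonal_apply_eq, hi, hj]
    have hDtri : ∀ i j : Fin n, j < i → D i j = 0 := hDmem.1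
    have hNmem : memWI J (P * D * P⁻¹) := h1 D hDmem
    have hdiag : ∀ i : Fin n, (P * D * P⁻¹) i i = (if i ∈ I then (1 : K) else 0) := by
      intro i
      rw [diag_conj P D P⁻¹ hPtri hDtri hQtri hPQ i]
      simp [hD]
    -- same-membership deductions
    have same_in : ∀ x y : Fin n, x ∈ J → y ∈ J → (x ∈ I ↔ y ∈ I) := by
      intro x y hx hy
      have := hNmem.2.1 x hx y hy
      rw [hdiag, hdiag] at this
      by_cases hxI : x ∈ I <;> by_cases hyI : y ∈ I <;>
        simp [hxI, hyI] at this ⊢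
    have same_out : ∀ x y : Fin n, x ∉ J → y ∉ J → (x ∈ I ↔ y ∈ I) := by
      intro x y hx hy
      have := hNmem.2.2 x hx y hy
      rw [hdiag, hdiag] at this
      by_cases hxI : x ∈ I <;> by_cases hyI : y ∈ I <;>
        simp [hxI, hyI] at this ⊢
    obtain ⟨jJ, hjJ⟩ := hJ
    obtain ⟨jJc, hjJc⟩ := (Set.ne_univ_iff_exists_notMem J).mp hJ'
    by_cases hcase : jJ ∈ I
    · left
      ext x
      constructor
      · intro hxI
        by_contra hxJ
        apply hI'
        ext y
        simp only [Set.mem_univ, iff_true]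
        by_cases hyJ : y ∈ J
        · exact (same_in y jJ hyJ hjJ).mpr hcase
        · exact (same_out y x hyJ hxJ).mpr hxI
      · intro hxJ
        exact (same_in x jJ hxJ hjJ).mpr hcase
    · right
      ext x
      simp only [Set.mem_compl_iff]
      constructor
      · intro hxI hxJ
        exact hcase ((same_in jJ x hjJ hxJ).mpr hxI)
      · intro hxJ
        by_contra hxI
        obtain ⟨iI, hiI⟩ := hI
        by_cases hiIJ : iI ∈ J
        · exact hcase ((same_in jJ iI hjJ hiIJ).mpr hiI)
        · exact hxI ((same_out x iI hxJ hiIJ).mpr hiI)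
  · rintro (rfl | rfl)
    · refine ⟨1, isUnit_one, ?_⟩
      have h1inv : (1 : Matrix (Fin n) (Fin n) K)⁻¹ = 1 := Matrix.inv_eq_left_inv (by simp)
      ext N
      simp [h1inv]
    · refine ⟨1, isUnit_one, ?_⟩
      have h1inv : (1 : Matrix (Fin n) (Fin n) K)⁻¹ = 1 := Matrix.inv_eq_left_inv (by simp)
      have : {M : Matrix (Fin n) (Fin n) K | memWI Jᶜ M} = {M | memWI J M} := by
        ext M; exact memWI_compl J M
      rw [this]
      ext N
      simp [h1inv]
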